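/- Let Z, Z' be as above and suppose {F_1,…,F_p} is a good set of minimal separators of the point P_i of multiplicity m_i. Then for each j = 1,…,p, the colon ideal (I_Z, F_1,…,F_{j−1}) : (F_j) in R equals I_{P_i} (for j = 1 this reads I_Z : (F_1) = I_{P_i}). -/

import Mathlib

/-!
Formalization of statements from "Separators of fat points in ℙⁿ×ℙᵐ"
(Guardo–Van Tuyl).  The bigraded coordinate ring `R = k[x₀,…,xₙ,y₀,…,y_m]` of
`ℙⁿ×ℙᵐ` is modelled as `MvPolynomial (Fin (n+1) ⊕ Fin (m+1)) k`, where the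
variable `X (Sum.inl i)` is `xᵢ` (degree `(1,0)`) and `X (Sum.inr j)` is `yⱼ`
(degree `(0,1)`); bihomogeneity is weighted homogeneity for the weight `biWeight`.
-/

open MvPolynomial

noncomputable section

/-- The ℕ²-graded coordinate ring `R` of `ℙⁿ×ℙᵐ`. -/
abbrev BiRing (k : Type) [Field k] (n m : ℕ) : Type :=
  MvPolynomial (Fin (n + 1) ⊕ Fin (m + 1)) k

/-- The weight function on the variables giving the ℕ²-grading:
`deg xᵢ = (1,0)` and `deg yⱼ = (0,1)`. -/
def biWeight (n m : ℕ) : Fin (n + 1) ⊕ Fin (m + 1) → ℕ × ℕ :=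
  Sum.elim (fun _ => (1, 0)) (fun _ => (0, 1))

variable {k : Type} [Field k] {n m : ℕ}

/-- `F` is bihomogeneous of degree `d ∈ ℕ²`. -/
def BihomOfDeg (F : BiRing k n m) (d : ℕ × ℕ) : Prop :=
  IsWeightedHomogeneous (biWeight n m) F d

/-- `I` is the defining (prime) ideal of a point of `ℙⁿ×ℙᵐ`: it is generated by
`n` linear forms of degree `(1,0)` and `m` linear forms of degree `(0,1)` which
are linearly independent (so that they cut out a single point of `ℙⁿ×ℙᵐ`). -/
def IsPointIdeal (I : Ideal (BiRing k n m)) : Prop :=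
  ∃ (L : Fin n → BiRing k n m) (L' : Fin m → BiRing k n m),
    (∀ a, BihomOfDeg (L a) (1, 0)) ∧ (∀ b, BihomOfDeg (L' b) (0, 1)) ∧
    LinearIndependent k (Sum.elim L L') ∧
    I = Ideal.span (Set.range L ∪ Set.range L')

/-- The defining ideal `I_Z = I_{P₁}^{m₁} ∩ ⋯ ∩ I_{P_s}^{m_s}` of the fat point
scheme `Z = m₁P₁ + ⋯ + m_sP_s`. -/
def fatIdeal {s : ℕ} (P : Fin s → Ideal (BiRing k n m)) (mult : Fin s → ℕ) :
    Ideal (BiRing k n m) :=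
  ⨅ j, P j ^ mult j

/-- `F` is a separator of the point `Pᵢ` of multiplicity `mᵢ`, where `IZ = I_Z`
and `IZ' = I_{Z'}`: a bihomogeneous form lying in `I_{Z'} \ I_Z`
(equivalently `F ∈ I_{Pᵢ}^{mᵢ-1} \ I_{Pᵢ}^{mᵢ}` and `F ∈ I_{Pⱼ}^{mⱼ}` for `j ≠ i`). -/
def IsSeparator (IZ IZ' : Ideal (BiRing k n m)) (F : BiRing k n m) : Prop :=
  (∃ d, BihomOfDeg F d) ∧ F ∈ IZ' ∧ F ∉ IZ

/-- `F₁,…,F_p` is a set of minimal separators of `Pᵢ` of multiplicity `mᵢ`: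
each `Fⱼ` is a (bihomogeneous) separator, their residue classes generate the
ideal `I_{Z'}/I_Z` of `R/I_Z` (equivalently `I_Z + (F₁,…,F_p) = I_{Z'}`), and no
fewer than `p` bihomogeneous forms have classes generating `I_{Z'}/I_Z`. -/
def IsMinSepSet (IZ IZ' : Ideal (BiRing k n m)) {p : ℕ}
    (F : Fin p → BiRing k n m) : Prop :=
  (∀ j, IsSeparator IZ IZ' (F j)) ∧
  IZ ⊔ Ideal.span (Set.range F) = IZ' ∧
  ∀ q : ℕ, q < p → ∀ G : Fin q → BiRing k n m,
    (∀ j, ∃ d, BihomOfDeg (G j) d) → IZ ⊔ Ideal.span (Set.range G) ≠ IZ'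

/-- A family `F₁,…,F_p` of forms with `deg Fⱼ = d j` is a *good* set (of minimal
separators) if for every `t ∈ ℕ²` the classes of `x₀^{t₁-dⱼ₁} y₀^{t₂-dⱼ₂} Fⱼ`
(over those `j` with `d j ⪯ t` componentwise) are linearly independent in
`(I_{Z'}/I_Z)_t`; i.e. any `k`-linear combination lying in `I_Z` has all its
coefficients equal to zero. -/
def IsGoodSepSet {p : ℕ} (IZ : Ideal (BiRing k n m)) (F : Fin p → BiRing k n m)
    (d : Fin p → ℕ × ℕ) : Prop :=
  ∀ t : ℕ × ℕ, ∀ c : Fin p → k,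
    (∑ j ∈ Finset.univ.filter (fun j => (d j).1 ≤ t.1 ∧ (d j).2 ≤ t.2),
        c j • (X (Sum.inl 0) ^ (t.1 - (d j).1) * X (Sum.inr 0) ^ (t.2 - (d j).2) * F j))
      ∈ IZ →
    ∀ j : Fin p, (d j).1 ≤ t.1 → (d j).2 ≤ t.2 → c j = 0


namespace GVAux

noncomputable local instance : GradedAlgebra (weightedHomogeneousSubmodule k (biWeight n m)) :=
  weightedGradedAlgebra k (biWeight n m)

lemma decompose_coe (φ : BiRing k n m) (t : ℕ × ℕ) :
    (DirectSum.decompose (weightedHomogeneousSubmodule k (biWeight n m)) φ t : BiRing k n m)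
      = weightedHomogeneousComponent (biWeight n m) t φ :=
  MvPolynomial.decompose'_apply k (biWeight n m) φ t

lemma weight_eq (u : Fin (n + 1) ⊕ Fin (m + 1) →₀ ℕ) :
    Finsupp.weight (biWeight n m) u
      = (∑ i : Fin (n + 1), u (Sum.inl i), ∑ j : Fin (m + 1), u (Sum.inr j)) := by
  rw [Finsupp.weight_apply, Finsupp.sum_fintype]
  · rw [Fintype.sum_sum_type]
    simp only [biWeight, Sum.elim_inl, Sum.elim_inr, Prod.smul_mk, smul_eq_mul, mul_one, mul_zero]
    rw [Prod.ext_iff]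
    constructor <;> simp [Prod.fst_sum, Prod.snd_sum]
  · intro v; exact zero_smul ℕ _

lemma weight_single_smul (v : Fin (n + 1) ⊕ Fin (m + 1)) (c : ℕ) :
    Finsupp.weight (biWeight n m) (Finsupp.single v c) = c • biWeight n m v := by
  rw [Finsupp.weight_apply, Finsupp.sum_single_index]
  exact zero_smul ℕ _

lemma eq_single_left {u : Fin (n + 1) ⊕ Fin (m + 1) →₀ ℕ}
    (hu : Finsupp.weight (biWeight n m) u = ((1 : ℕ), (0 : ℕ))) :
    ∃ i, u = Finsupp.single (Sum.inl i) 1 := by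
  rw [weight_eq] at hu
  have h1 := congrArg Prod.fst hu
  have h2 := congrArg Prod.snd hu
  simp only at h1 h2
  have h2' : ∀ j, u (Sum.inr j) = 0 := fun j =>
    Finset.sum_eq_zero_iff.mp h2 j (Finset.mem_univ j)
  obtain ⟨i, hi, hine⟩ := Finset.exists_ne_zero_of_sum_ne_zero
    (s := Finset.univ) (f := fun i => u (Sum.inl i)) (by rw [h1]; exact one_ne_zero)
  have hle : u (Sum.inl i) ≤ 1 :=
    le_trans (Finset.single_le_sum (f := fun i => u (Sum.inl i)) (fun _ _ => Nat.zero_le _) hi)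
      (le_of_eq h1)
  have h1i : u (Sum.inl i) = 1 := le_antisymm hle (Nat.one_le_iff_ne_zero.mpr hine)
  have hsum := Finset.add_sum_erase Finset.univ (fun i => u (Sum.inl i)) hi
  have hrest : ∀ i', i' ≠ i → u (Sum.inl i') = 0 := by
    intro i' hne'
    have hz : ∑ x ∈ Finset.univ.erase i, u (Sum.inl x) = 0 := by
      omega
    exact Finset.sum_eq_zero_iff.mp hz i' (Finset.mem_erase.mpr ⟨hne', Finset.mem_univ _⟩)
  refine ⟨i, ?_⟩
  ext v
  rcases v with i' | j'
  · rcases eq_or_ne i' i with rfl | hne'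
    · simp [h1i, Finsupp.single_apply]
    · simp [hrest i' hne', Finsupp.single_apply, Sum.inl.injEq, (hne'.symm : ¬ i = i')]
  · simp [h2' j', Finsupp.single_apply]

lemma eq_single_right {u : Fin (n + 1) ⊕ Fin (m + 1) →₀ ℕ}
    (hu : Finsupp.weight (biWeight n m) u = ((0 : ℕ), (1 : ℕ))) :
    ∃ j, u = Finsupp.single (Sum.inr j) 1 := by
  rw [weight_eq] at hu
  have h1 := congrArg Prod.fst hu
  have h2 := congrArg Prod.snd hu
  simp only at h1 h2
  have h1' : ∀ i, u (Sum.inl i) = 0 := fun i =>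
    Finset.sum_eq_zero_iff.mp h1 i (Finset.mem_univ i)
  obtain ⟨i, hi, hine⟩ := Finset.exists_ne_zero_of_sum_ne_zero
    (s := Finset.univ) (f := fun j => u (Sum.inr j)) (by rw [h2]; exact one_ne_zero)
  have hle : u (Sum.inr i) ≤ 1 :=
    le_trans (Finset.single_le_sum (f := fun j => u (Sum.inr j)) (fun _ _ => Nat.zero_le _) hi)
      (le_of_eq h2)
  have h1i : u (Sum.inr i) = 1 := le_antisymm hle (Nat.one_le_iff_ne_zero.mpr hine)
  have hsum := Finset.add_sum_erase Finset.univ (fun j => u (Sum.inr j)) hi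
  have hrest : ∀ j', j' ≠ i → u (Sum.inr j') = 0 := by
    intro j' hne'
    have hz : ∑ x ∈ Finset.univ.erase i, u (Sum.inr x) = 0 := by
      omega
    exact Finset.sum_eq_zero_iff.mp hz j' (Finset.mem_erase.mpr ⟨hne', Finset.mem_univ _⟩)
  refine ⟨i, ?_⟩
  ext v
  rcases v with i' | j'
  · simp [h1' i', Finsupp.single_apply]
  · rcases eq_or_ne j' i with rfl | hne'
    · simp [h1i, Finsupp.single_apply]
    · simp [hrest j' hne', Finsupp.single_apply, Sum.inr.injEq, (hne'.symm : ¬ i = j')]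

lemma mem_span_X_left {f : BiRing k n m}
    (hf : IsWeightedHomogeneous (biWeight n m) f ((1 : ℕ), (0 : ℕ))) :
    f ∈ Submodule.span k (Set.range fun i : Fin (n + 1) => (X (Sum.inl i) : BiRing k n m)) := by
  rw [← support_sum_monomial_coeff f]
  apply Submodule.sum_mem
  intro u hu
  obtain ⟨i, rfl⟩ := eq_single_left (hf (mem_support_iff.mp hu))
  have heq : (monomial (Finsupp.single (Sum.inl i) 1)
        (coeff (Finsupp.single (Sum.inl i) 1) f) : BiRing k n m)
      = coeff (Finsupp.single (Sum.inl i) 1) f • X (Sum.inl i) := by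
    rw [smul_eq_C_mul, X, C_mul_monomial, mul_one]
  rw [heq]
  exact Submodule.smul_mem _ _ (Submodule.subset_span ⟨i, rfl⟩)

lemma mem_span_X_right {f : BiRing k n m}
    (hf : IsWeightedHomogeneous (biWeight n m) f ((0 : ℕ), (1 : ℕ))) :
    f ∈ Submodule.span k (Set.range fun j : Fin (m + 1) => (X (Sum.inr j) : BiRing k n m)) := by
  rw [← support_sum_monomial_coeff f]
  apply Submodule.sum_mem
  intro u hu
  obtain ⟨j, rfl⟩ := eq_single_right (hf (mem_support_iff.mp hu))
  have heq : (monomial (Finsupp.single (Sum.inr j) 1)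
        (coeff (Finsupp.single (Sum.inr j) 1) f) : BiRing k n m)
      = coeff (Finsupp.single (Sum.inr j) 1) f • X (Sum.inr j) := by
    rw [smul_eq_C_mul, X, C_mul_monomial, mul_one]
  rw [heq]
  exact Submodule.smul_mem _ _ (Submodule.subset_span ⟨j, rfl⟩)

lemma pinX (Pi : Ideal (BiRing k n m)) (hPi : IsPointIdeal Pi)
    (hx0 : (X (Sum.inl 0) : BiRing k n m) ∉ Pi) :
    ∀ i : Fin (n + 1), ∃ α : k, (X (Sum.inl i) : BiRing k n m) - α • X (Sum.inl 0) ∈ Pi := by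
  classical
  obtain ⟨L, L', hL, hL', hli, hspan⟩ := hPi
  have hLP : ∀ a, L a ∈ Pi := fun a => by
    rw [hspan]; exact Ideal.subset_span (Or.inl ⟨a, rfl⟩)
  have hsub : Submodule.span k (Set.range L) ≤ Pi.restrictScalars k := by
    rw [Submodule.span_le]; rintro x ⟨a, rfl⟩; exact hLP a
  have hbli : LinearIndependent k (fun i : Fin (n + 1) => (X (Sum.inl i) : BiRing k n m)) :=
    (MvPolynomial.linearIndependent_X _ k).comp Sum.inl Sum.inl_injective
  set W := Submodule.span k (Set.range fun i : Fin (n + 1) => (X (Sum.inl i) : BiRing k n m))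
    with hW
  have hfr : Module.finrank k W = n + 1 := by
    rw [hW, finrank_span_eq_card hbli, Fintype.card_fin]
  have hLW : ∀ a, L a ∈ W := fun a => mem_span_X_left (hL a)
  have hx0W : (X (Sum.inl 0) : BiRing k n m) ∈ W := Submodule.subset_span ⟨0, rfl⟩
  have hLli : LinearIndependent k L := by
    have h := hli.comp Sum.inl Sum.inl_injective
    rwa [Sum.elim_comp_inl] at h
  have hx0span : (X (Sum.inl 0) : BiRing k n m) ∉ Submodule.span k (Set.range L) :=
    fun h => hx0 (hsub h)
  have hgli : LinearIndependent k
      (Sum.elim L (fun _ : Fin 1 => (X (Sum.inl 0) : BiRing k n m))) := by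
    apply hLli.sum_type ((linearIndependent_unique_iff (v :=
      (fun _ : Fin 1 => (X (Sum.inl 0) : BiRing k n m)))).mpr (MvPolynomial.X_ne_zero _))
    rw [Set.range_const]
    rw [Submodule.disjoint_def]
    intro z hz1 hz2
    rw [Submodule.mem_span_singleton] at hz2
    obtain ⟨c, rfl⟩ := hz2
    rcases eq_or_ne c 0 with rfl | hc
    · simp
    · exact absurd (by simpa [smul_smul, inv_mul_cancel₀ hc] using
        Submodule.smul_mem _ c⁻¹ hz1) hx0span
  set g : Fin n ⊕ Fin 1 → W :=
    Sum.elim (fun a => ⟨L a, hLW a⟩) (fun _ => ⟨X (Sum.inl 0), hx0W⟩) with hg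
  have hgli' : LinearIndependent k g := by
    apply LinearIndependent.of_comp W.subtype
    have hcomp : W.subtype ∘ g = Sum.elim L (fun _ : Fin 1 => (X (Sum.inl 0) : BiRing k n m)) := by
      funext z; rcases z with a | b <;> rfl
    rw [hcomp]; exact hgli
  have hcard : Fintype.card (Fin n ⊕ Fin 1) = Module.finrank k W := by simp [hfr]
  have hspan_top := hgli'.span_eq_top_of_card_eq_finrank hcard
  intro i
  have hiW : (⟨X (Sum.inl i), Submodule.subset_span ⟨i, rfl⟩⟩ : W)
      ∈ Submodule.span k (Set.range g) := by rw [hspan_top]; trivial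
  obtain ⟨c, hc⟩ := (Submodule.mem_span_range_iff_exists_fun k).mp hiW
  refine ⟨c (Sum.inr 0), ?_⟩
  have hc' : ∑ z : Fin n ⊕ Fin 1, c z • ((g z : BiRing k n m)) = X (Sum.inl i) := by
    have h := congrArg (fun w : W => (w : BiRing k n m)) hc
    simpa using h
  rw [Fintype.sum_sum_type] at hc'
  simp only [hg, Sum.elim_inl, Sum.elim_inr, Fin.sum_univ_one] at hc'
  have h9 : (X (Sum.inl i) : BiRing k n m) - c (Sum.inr 0) • X (Sum.inl 0)
      = ∑ a : Fin n, c (Sum.inl a) • L a := by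
    rw [← hc', add_sub_cancel_right]
  rw [h9]
  exact Submodule.sum_mem _ fun a _ => by
    rw [smul_eq_C_mul]; exact Ideal.mul_mem_left _ _ (hLP a)

lemma pinY (Pi : Ideal (BiRing k n m)) (hPi : IsPointIdeal Pi)
    (hy0 : (X (Sum.inr 0) : BiRing k n m) ∉ Pi) :
    ∀ j : Fin (m + 1), ∃ α : k, (X (Sum.inr j) : BiRing k n m) - α • X (Sum.inr 0) ∈ Pi := by
  classical
  obtain ⟨L, L', hL, hL', hli, hspan⟩ := hPi
  have hLP : ∀ a, L' a ∈ Pi := fun a => by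
    rw [hspan]; exact Ideal.subset_span (Or.inr ⟨a, rfl⟩)
  have hsub : Submodule.span k (Set.range L') ≤ Pi.restrictScalars k := by
    rw [Submodule.span_le]; rintro x ⟨a, rfl⟩; exact hLP a
  have hbli : LinearIndependent k (fun j : Fin (m + 1) => (X (Sum.inr j) : BiRing k n m)) :=
    (MvPolynomial.linearIndependent_X _ k).comp Sum.inr Sum.inr_injective
  set W := Submodule.span k (Set.range fun j : Fin (m + 1) => (X (Sum.inr j) : BiRing k n m))
    with hW
  have hfr : Module.finrank k W = m + 1 := by
    rw [hW, finrank_span_eq_card hbli, Fintype.card_fin]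
  have hLW : ∀ a, L' a ∈ W := fun a => mem_span_X_right (hL' a)
  have hy0W : (X (Sum.inr 0) : BiRing k n m) ∈ W := Submodule.subset_span ⟨0, rfl⟩
  have hLli : LinearIndependent k L' := by
    have h := hli.comp Sum.inr Sum.inr_injective
    rwa [Sum.elim_comp_inr] at h
  have hy0span : (X (Sum.inr 0) : BiRing k n m) ∉ Submodule.span k (Set.range L') :=
    fun h => hy0 (hsub h)
  have hgli : LinearIndependent k
      (Sum.elim L' (fun _ : Fin 1 => (X (Sum.inr 0) : BiRing k n m))) := by
    apply hLli.sum_type ((linearIndependent_unique_iff (v :=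
      (fun _ : Fin 1 => (X (Sum.inr 0) : BiRing k n m)))).mpr (MvPolynomial.X_ne_zero _))
    rw [Set.range_const]
    rw [Submodule.disjoint_def]
    intro z hz1 hz2
    rw [Submodule.mem_span_singleton] at hz2
    obtain ⟨c, rfl⟩ := hz2
    rcases eq_or_ne c 0 with rfl | hc
    · simp
    · exact absurd (by simpa [smul_smul, inv_mul_cancel₀ hc] using
        Submodule.smul_mem _ c⁻¹ hz1) hy0span
  set g : Fin m ⊕ Fin 1 → W :=
    Sum.elim (fun a => ⟨L' a, hLW a⟩) (fun _ => ⟨X (Sum.inr 0), hy0W⟩) with hg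
  have hgli' : LinearIndependent k g := by
    apply LinearIndependent.of_comp W.subtype
    have hcomp : W.subtype ∘ g = Sum.elim L' (fun _ : Fin 1 => (X (Sum.inr 0) : BiRing k n m)) := by
      funext z; rcases z with a | b <;> rfl
    rw [hcomp]; exact hgli
  have hcard : Fintype.card (Fin m ⊕ Fin 1) = Module.finrank k W := by simp [hfr]
  have hspan_top := hgli'.span_eq_top_of_card_eq_finrank hcard
  intro j
  have hjW : (⟨X (Sum.inr j), Submodule.subset_span ⟨j, rfl⟩⟩ : W)
      ∈ Submodule.span k (Set.range g) := by rw [hspan_top]; trivial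
  obtain ⟨c, hc⟩ := (Submodule.mem_span_range_iff_exists_fun k).mp hjW
  refine ⟨c (Sum.inr 0), ?_⟩
  have hc' : ∑ z : Fin m ⊕ Fin 1, c z • ((g z : BiRing k n m)) = X (Sum.inr j) := by
    have h := congrArg (fun w : W => (w : BiRing k n m)) hc
    simpa using h
  rw [Fintype.sum_sum_type] at hc'
  simp only [hg, Sum.elim_inl, Sum.elim_inr, Fin.sum_univ_one] at hc'
  have h9 : (X (Sum.inr j) : BiRing k n m) - c (Sum.inr 0) • X (Sum.inr 0)
      = ∑ a : Fin m, c (Sum.inl a) • L' a := by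
    rw [← hc', add_sub_cancel_right]
  rw [h9]
  exact Submodule.sum_mem _ fun a _ => by
    rw [smul_eq_C_mul]; exact Ideal.mul_mem_left _ _ (hLP a)

lemma mono_nf (Pi : Ideal (BiRing k n m))
    (hpx : ∀ i : Fin (n + 1), ∃ α : k, (X (Sum.inl i) : BiRing k n m) - α • X (Sum.inl 0) ∈ Pi)
    (hpy : ∀ j : Fin (m + 1), ∃ α : k, (X (Sum.inr j) : BiRing k n m) - α • X (Sum.inr 0) ∈ Pi)
    (u : (Fin (n + 1) ⊕ Fin (m + 1)) →₀ ℕ) :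
    ∃ γ : k, (monomial u (1 : k) : BiRing k n m)
      - γ • (X (Sum.inl 0) ^ (Finsupp.weight (biWeight n m) u).1
           * X (Sum.inr 0) ^ (Finsupp.weight (biWeight n m) u).2) ∈ Pi := by
  classical
  induction u using Finsupp.induction with
  | zero => exact ⟨1, by simp⟩
  | single_add v cnt f hvf hcnt ih =>
    obtain ⟨γ, hγ⟩ := ih
    have hmono : (monomial (Finsupp.single v cnt + f) (1 : k) : BiRing k n m)
        = X v ^ cnt * monomial f 1 := by
      rw [X_pow_eq_monomial, monomial_mul, one_mul]
    have hwadd : Finsupp.weight (biWeight n m) (Finsupp.single v cnt + f)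
        = cnt • biWeight n m v + Finsupp.weight (biWeight n m) f := by
      rw [map_add, weight_single_smul]
    rcases v with i | jj
    · obtain ⟨α, hα⟩ := hpx i
      refine ⟨α ^ cnt * γ, ?_⟩
      have hpow : (X (Sum.inl i) : BiRing k n m) ^ cnt - (α • X (Sum.inl 0)) ^ cnt ∈ Pi := by
        obtain ⟨q, hq⟩ := sub_dvd_pow_sub_pow (X (Sum.inl i) : BiRing k n m)
          (α • X (Sum.inl 0)) cnt
        rw [hq]; exact Ideal.mul_mem_right _ _ hα
      have hw1 : (Finsupp.weight (biWeight n m) (Finsupp.single (Sum.inl i) cnt + f)).1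
          = cnt + (Finsupp.weight (biWeight n m) f).1 := by
        rw [hwadd]; simp [biWeight, Prod.smul_mk]
      have hw2 : (Finsupp.weight (biWeight n m) (Finsupp.single (Sum.inl i) cnt + f)).2
          = (Finsupp.weight (biWeight n m) f).2 := by
        rw [hwadd]; simp [biWeight, Prod.smul_mk]
      rw [hmono, hw1, hw2]
      have key : (X (Sum.inl i) : BiRing k n m) ^ cnt * monomial f 1
          - (α ^ cnt * γ) • (X (Sum.inl 0) ^ (cnt + (Finsupp.weight (biWeight n m) f).1)
              * X (Sum.inr 0) ^ (Finsupp.weight (biWeight n m) f).2)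
          = (X (Sum.inl i) ^ cnt - (α • X (Sum.inl 0)) ^ cnt) * monomial f 1
            + (α • X (Sum.inl 0)) ^ cnt
              * (monomial f 1 - γ • (X (Sum.inl 0) ^ (Finsupp.weight (biWeight n m) f).1
                  * X (Sum.inr 0) ^ (Finsupp.weight (biWeight n m) f).2)) := by
        simp only [smul_eq_C_mul, map_mul, map_pow, pow_add, mul_pow]
        ring
      rw [key]
      exact Submodule.add_mem _ (Ideal.mul_mem_right _ _ hpow) (Ideal.mul_mem_left _ _ hγ)
    · obtain ⟨α, hα⟩ := hpy jj
      refine ⟨α ^ cnt * γ, ?_⟩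
      have hpow : (X (Sum.inr jj) : BiRing k n m) ^ cnt - (α • X (Sum.inr 0)) ^ cnt ∈ Pi := by
        obtain ⟨q, hq⟩ := sub_dvd_pow_sub_pow (X (Sum.inr jj) : BiRing k n m)
          (α • X (Sum.inr 0)) cnt
        rw [hq]; exact Ideal.mul_mem_right _ _ hα
      have hw1 : (Finsupp.weight (biWeight n m) (Finsupp.single (Sum.inr jj) cnt + f)).1
          = (Finsupp.weight (biWeight n m) f).1 := by
        rw [hwadd]; simp [biWeight, Prod.smul_mk]
      have hw2 : (Finsupp.weight (biWeight n m) (Finsupp.single (Sum.inr jj) cnt + f)).2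
          = cnt + (Finsupp.weight (biWeight n m) f).2 := by
        rw [hwadd]; simp [biWeight, Prod.smul_mk]
      rw [hmono, hw1, hw2]
      have key : (X (Sum.inr jj) : BiRing k n m) ^ cnt * monomial f 1
          - (α ^ cnt * γ) • (X (Sum.inl 0) ^ (Finsupp.weight (biWeight n m) f).1
              * X (Sum.inr 0) ^ (cnt + (Finsupp.weight (biWeight n m) f).2))
          = (X (Sum.inr jj) ^ cnt - (α • X (Sum.inr 0)) ^ cnt) * monomial f 1
            + (α • X (Sum.inr 0)) ^ cnt
              * (monomial f 1 - γ • (X (Sum.inl 0) ^ (Finsupp.weight (biWeight n m) f).1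
                  * X (Sum.inr 0) ^ (Finsupp.weight (biWeight n m) f).2)) := by
        simp only [smul_eq_C_mul, map_mul, map_pow, pow_add, mul_pow]
        ring
      rw [key]
      exact Submodule.add_mem _ (Ideal.mul_mem_right _ _ hpow) (Ideal.mul_mem_left _ _ hγ)

lemma nf (Pi : Ideal (BiRing k n m))
    (hpx : ∀ i : Fin (n + 1), ∃ α : k, (X (Sum.inl i) : BiRing k n m) - α • X (Sum.inl 0) ∈ Pi)
    (hpy : ∀ j : Fin (m + 1), ∃ α : k, (X (Sum.inr j) : BiRing k n m) - α • X (Sum.inr 0) ∈ Pi)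
    {B : BiRing k n m} {ab : ℕ × ℕ} (hB : IsWeightedHomogeneous (biWeight n m) B ab) :
    ∃ γ : k, B - γ • (X (Sum.inl 0) ^ ab.1 * X (Sum.inr 0) ^ ab.2) ∈ Pi := by
  classical
  choose g hg using mono_nf Pi hpx hpy
  refine ⟨∑ u ∈ B.support, coeff u B * g u, ?_⟩
  have hBsum : B = ∑ u ∈ B.support, coeff u B • (monomial u (1 : k) : BiRing k n m) := by
    conv_lhs => rw [← support_sum_monomial_coeff B]
    apply Finset.sum_congr rfl
    intro u _
    rw [smul_monomial, smul_eq_mul, mul_one]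
  nth_rewrite 1 [hBsum]
  rw [Finset.sum_smul, ← Finset.sum_sub_distrib]
  apply Submodule.sum_mem
  intro u hu
  have hw : Finsupp.weight (biWeight n m) u = ab := hB (mem_support_iff.mp hu)
  have hgu := hg u
  rw [hw] at hgu
  have h2 : coeff u B • (monomial u (1 : k) : BiRing k n m)
      - (coeff u B * g u) • (X (Sum.inl 0) ^ ab.1 * X (Sum.inr 0) ^ ab.2)
      = coeff u B • ((monomial u (1 : k) : BiRing k n m)
          - g u • (X (Sum.inl 0) ^ ab.1 * X (Sum.inr 0) ^ ab.2)) := by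
    rw [smul_sub, mul_smul]
  rw [h2, smul_eq_C_mul]
  exact Ideal.mul_mem_left _ _ hgu

lemma comp_mul (G F : BiRing k n m) {dF : ℕ × ℕ}
    (hF : IsWeightedHomogeneous (biWeight n m) F dF) (e : ℕ × ℕ) :
    weightedHomogeneousComponent (biWeight n m) (e + dF) (G * F)
      = weightedHomogeneousComponent (biWeight n m) e G * F := by
  classical
  set T := (weightedHomogeneousComponent_finsupp (w := biWeight n m) (φ := G)).toFinset with hT
  have hG : G = ∑ u ∈ T, weightedHomogeneousComponent (biWeight n m) u G := by
    rw [hT, ← finsum_eq_sum _ (weightedHomogeneousComponent_finsupp (w := biWeight n m) (φ := G)),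
      sum_weightedHomogeneousComponent]
  conv_lhs => rw [hG, Finset.sum_mul, map_sum]
  have hterm : ∀ u ∈ T, weightedHomogeneousComponent (biWeight n m) (e + dF)
      (weightedHomogeneousComponent (biWeight n m) u G * F)
      = if u = e then weightedHomogeneousComponent (biWeight n m) u G * F else 0 := by
    intro u _
    have hh : IsWeightedHomogeneous (biWeight n m)
        (weightedHomogeneousComponent (biWeight n m) u G * F) (u + dF) :=
      (weightedHomogeneousComponent_isWeightedHomogeneous u G).mul hF
    by_cases he : u = e
    · subst he
      rw [if_pos rfl, IsWeightedHomogeneous.weightedHomogeneousComponent_same hh]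
    · rw [if_neg he]
      exact IsWeightedHomogeneous.weightedHomogeneousComponent_ne _ hh
        (fun hc => he (add_right_cancel hc).symm)
  rw [Finset.sum_congr rfl hterm, Finset.sum_ite_eq' T e
    (fun u => weightedHomogeneousComponent (biWeight n m) u G * F)]
  by_cases he : e ∈ T
  · rw [if_pos he]
  · rw [if_neg he]
    have h0 : weightedHomogeneousComponent (biWeight n m) e G = 0 := by
      by_contra hne
      exact he ((Set.Finite.mem_toFinset _).mpr hne)
    rw [h0, zero_mul]

lemma comp_mul_ne (G F : BiRing k n m) {dF : ℕ × ℕ}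
    (hF : IsWeightedHomogeneous (biWeight n m) F dF) (t : ℕ × ℕ)
    (h : ∀ u : ℕ × ℕ, u + dF ≠ t) :
    weightedHomogeneousComponent (biWeight n m) t (G * F) = 0 := by
  classical
  set T := (weightedHomogeneousComponent_finsupp (w := biWeight n m) (φ := G)).toFinset with hT
  have hG : G = ∑ u ∈ T, weightedHomogeneousComponent (biWeight n m) u G := by
    rw [hT, ← finsum_eq_sum _ (weightedHomogeneousComponent_finsupp (w := biWeight n m) (φ := G)),
      sum_weightedHomogeneousComponent]
  conv_lhs => rw [hG, Finset.sum_mul, map_sum]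
  apply Finset.sum_eq_zero
  intro u _
  have hh : IsWeightedHomogeneous (biWeight n m)
      (weightedHomogeneousComponent (biWeight n m) u G * F) (u + dF) :=
    (weightedHomogeneousComponent_isWeightedHomogeneous u G).mul hF
  exact IsWeightedHomogeneous.weightedHomogeneousComponent_ne _ hh
    (fun hc => h u hc.symm)

lemma pointIdeal_isHom {I : Ideal (BiRing k n m)} (h : IsPointIdeal I) :
    Ideal.IsHomogeneous (weightedHomogeneousSubmodule k (biWeight n m)) I := by
  obtain ⟨L, L', hL, hL', -, rfl⟩ := h
  apply Ideal.homogeneous_span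
  rintro x (⟨a, rfl⟩ | ⟨b, rfl⟩)
  · exact ⟨(1, 0), hL a⟩
  · exact ⟨(0, 1), hL' b⟩

lemma isHom_pow {I : Ideal (BiRing k n m)}
    (h : Ideal.IsHomogeneous (weightedHomogeneousSubmodule k (biWeight n m)) I) (c : ℕ) :
    Ideal.IsHomogeneous (weightedHomogeneousSubmodule k (biWeight n m)) (I ^ c) := by
  induction c with
  | zero => simpa [pow_zero, Ideal.one_eq_top] using
      Ideal.IsHomogeneous.top (weightedHomogeneousSubmodule k (biWeight n m))
  | succ c ih => rw [pow_succ]; exact ih.mul h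

end GVAux

noncomputable local instance biGradedAlgebra :
    GradedAlgebra (weightedHomogeneousSubmodule k (biWeight n m)) :=
  weightedGradedAlgebra k (biWeight n m)

/-- Lemma 6.1: if `{F₁,…,F_p}` is a good set of minimal
separators of the point `Pᵢ` of multiplicity `mᵢ`, then for each `j`,
`(I_Z, F₁,…,F_{j-1}) : (Fⱼ) = I_{Pᵢ}`. -/
theorem stmt11 [IsAlgClosed k] [CharZero k] {s : ℕ}
    (P : Fin s → Ideal (BiRing k n m)) (mult : Fin s → ℕ)
    (hP : ∀ j, IsPointIdeal (P j)) (hinj : Function.Injective P)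
    (hmult : ∀ j, 1 ≤ mult j) (i : Fin s)
    (IZ IZ' : Ideal (BiRing k n m))
    (hIZ : IZ = fatIdeal P mult)
    (hIZ' : IZ' = fatIdeal P (Function.update mult i (mult i - 1)))
    (hx : ∀ g : BiRing k n m, X (Sum.inl 0) * g ∈ IZ → g ∈ IZ)
    (hy : ∀ g : BiRing k n m, X (Sum.inr 0) * g ∈ IZ → g ∈ IZ)
    (hx' : ∀ g : BiRing k n m, X (Sum.inl 0) * g ∈ IZ' → g ∈ IZ')
    (hy' : ∀ g : BiRing k n m, X (Sum.inr 0) * g ∈ IZ' → g ∈ IZ')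
    {p : ℕ} (F : Fin p → BiRing k n m) (d : Fin p → ℕ × ℕ)
    (hdeg : ∀ j, BihomOfDeg (F j) (d j))
    (hmin : IsMinSepSet IZ IZ' F)
    (hgood : IsGoodSepSet IZ F d) :
    ∀ j : Fin p,
      Submodule.colon (IZ ⊔ Ideal.span (F '' {l : Fin p | l < j}))
        (Ideal.span {F j}) = P i := by
  intro j
  classical
  have hFZ' : ∀ l, F l ∈ IZ' := fun l => by
    rw [← hmin.2.1]; exact Ideal.mem_sup_right (Ideal.subset_span ⟨l, rfl⟩)
  have hmulsep : ∀ g ∈ P i, ∀ f ∈ IZ', g * f ∈ IZ := by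
    intro g hg f hf
    rw [hIZ, fatIdeal, Submodule.mem_iInf]
    intro l
    rw [hIZ', fatIdeal, Submodule.mem_iInf] at hf
    rcases eq_or_ne l i with rfl | hne
    · have hf' := hf l
      rw [Function.update_self] at hf'
      have hml : mult l = (mult l - 1) + 1 := (Nat.succ_pred_eq_of_pos (hmult l)).symm
      rw [hml, pow_succ]
      have hmm := Ideal.mul_mem_mul hf' hg
      rwa [mul_comm f g] at hmm
    · have hf' := hf l
      rw [Function.update_of_ne hne] at hf'
      exact Ideal.mul_mem_left _ g hf'
  have hFnotZ : F j ∉ IZ := (hmin.1 j).2.2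
  have hx0 : (X (Sum.inl 0) : BiRing k n m) ∉ P i := fun hmem =>
    hFnotZ (hx _ (hmulsep _ hmem _ (hFZ' j)))
  have hy0 : (X (Sum.inr 0) : BiRing k n m) ∉ P i := fun hmem =>
    hFnotZ (hy _ (hmulsep _ hmem _ (hFZ' j)))
  have hpx := GVAux.pinX (P i) (hP i) hx0
  have hpy := GVAux.pinY (P i) (hP i) hy0
  have hIZhom : Ideal.IsHomogeneous (weightedHomogeneousSubmodule k (biWeight n m)) IZ := by
    rw [hIZ, fatIdeal]
    exact Ideal.IsHomogeneous.iInf fun l =>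
      GVAux.isHom_pow (GVAux.pointIdeal_isHom (hP l)) (mult l)
  have hJhom : Ideal.IsHomogeneous (weightedHomogeneousSubmodule k (biWeight n m))
      (IZ ⊔ Ideal.span (F '' {l : Fin p | l < j})) :=
    hIZhom.sup (Ideal.homogeneous_span _ _ (by rintro x ⟨l, -, rfl⟩; exact ⟨d l, hdeg l⟩))
  apply le_antisymm
  · -- colon ≤ P i
    intro g hg
    have hgF : g * F j ∈ IZ ⊔ Ideal.span (F '' {l : Fin p | l < j}) := by
      have h1 := Submodule.mem_colon.mp hg (F j) (Ideal.mem_span_singleton_self _)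
      simpa [smul_eq_mul] using h1
    have hcomp : ∀ e : ℕ × ℕ, weightedHomogeneousComponent (biWeight n m) e g ∈ P i := by
      intro e
      have hGeF : weightedHomogeneousComponent (biWeight n m) e g * F j
          ∈ IZ ⊔ Ideal.span (F '' {l : Fin p | l < j}) := by
        have h2 := hJhom (e + d j) hgF
        rwa [GVAux.decompose_coe, GVAux.comp_mul g (F j) (hdeg j) e] at h2
      obtain ⟨γ, hγ⟩ := GVAux.nf (P i) hpx hpy
        (weightedHomogeneousComponent_isWeightedHomogeneous (w := biWeight n m) e g)
      set Ge := weightedHomogeneousComponent (biWeight n m) e g with hGe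
      set t : ℕ × ℕ := e + d j with ht
      have htd1 : (d j).1 ≤ t.1 := by simp [ht, Prod.fst_add]
      have htd2 : (d j).2 ≤ t.2 := by simp [ht, Prod.snd_add]
      have hte1 : t.1 - (d j).1 = e.1 := by simp [ht, Prod.fst_add]
      have hte2 : t.2 - (d j).2 = e.2 := by simp [ht, Prod.snd_add]
      suffices hγ0 : γ = 0 by
        have hfin := hγ; rw [hγ0, zero_smul, sub_zero] at hfin; exact hfin
      have hsm : γ • ((X (Sum.inl 0) ^ (t.1 - (d j).1) * X (Sum.inr 0) ^ (t.2 - (d j).2)) * F j)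
          ∈ IZ ⊔ Ideal.span (F '' {l : Fin p | l < j}) := by
        have h3 : (Ge - γ • (X (Sum.inl 0) ^ e.1 * X (Sum.inr 0) ^ e.2)) * F j ∈ IZ :=
          hmulsep _ hγ _ (hFZ' j)
        have h4 : γ • ((X (Sum.inl 0) ^ (t.1 - (d j).1) * X (Sum.inr 0) ^ (t.2 - (d j).2)) * F j)
            = Ge * F j - (Ge - γ • (X (Sum.inl 0) ^ e.1 * X (Sum.inr 0) ^ e.2)) * F j := by
          rw [hte1, hte2]
          simp only [smul_eq_C_mul]
          ring
        rw [h4]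
        exact Submodule.sub_mem _ hGeF (Ideal.mem_sup_left h3)
      have hsm' : γ • ((X (Sum.inl 0) ^ (t.1 - (d j).1) * X (Sum.inr 0) ^ (t.2 - (d j).2)) * F j)
          ∈ IZ ⊔ Ideal.span (Set.range fun l : Fin p => if l < j then F l else 0) := by
        have hsp : Ideal.span (F '' {l : Fin p | l < j})
            ≤ Ideal.span (Set.range fun l : Fin p => if l < j then F l else 0) := by
          apply Ideal.span_mono
          rintro x ⟨l, hl, rfl⟩
          exact ⟨l, by simp [if_pos (Set.mem_setOf_eq ▸ hl)]⟩
        exact (sup_le_sup_left hsp IZ) hsm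
      obtain ⟨H, hH, bb, hbb, heq⟩ := Submodule.mem_sup.mp hsm'
      obtain ⟨c, hc⟩ := Ideal.mem_span_range_iff_exists_fun.mp hbb
      rw [← hc] at heq
      have hMFhom : IsWeightedHomogeneous (biWeight n m)
          ((X (Sum.inl 0) ^ (t.1 - (d j).1) * X (Sum.inr 0) ^ (t.2 - (d j).2)) * F j) t := by
        have hA : IsWeightedHomogeneous (biWeight n m)
            ((X (Sum.inl 0) : BiRing k n m) ^ (t.1 - (d j).1)) ((t.1 - (d j).1 : ℕ), (0 : ℕ)) := by
          rw [X_pow_eq_monomial]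
          apply isWeightedHomogeneous_monomial
          rw [GVAux.weight_single_smul]
          simp [biWeight, Prod.smul_mk]
        have hB : IsWeightedHomogeneous (biWeight n m)
            ((X (Sum.inr 0) : BiRing k n m) ^ (t.2 - (d j).2)) ((0 : ℕ), (t.2 - (d j).2 : ℕ)) := by
          rw [X_pow_eq_monomial]
          apply isWeightedHomogeneous_monomial
          rw [GVAux.weight_single_smul]
          simp [biWeight, Prod.smul_mk]
        have hAB := (hA.mul hB).mul (hdeg j)
        have heq2 : ((t.1 - (d j).1 : ℕ), (0 : ℕ)) + ((0 : ℕ), (t.2 - (d j).2 : ℕ)) + d j = t := by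
          rw [Prod.ext_iff]
          constructor
          · simp [Prod.fst_add]; omega
          · simp [Prod.snd_add]; omega
        rwa [heq2] at hAB
      have h7 := congrArg (weightedHomogeneousComponent (biWeight n m) t) heq
      rw [map_add, map_sum, LinearMap.map_smul_of_tower,
        IsWeightedHomogeneous.weightedHomogeneousComponent_same hMFhom] at h7
      have hterm : ∀ l : Fin p,
          weightedHomogeneousComponent (biWeight n m) t (c l * if l < j then F l else 0)
          = (if l < j ∧ ((d l).1 ≤ t.1 ∧ (d l).2 ≤ t.2) then
              weightedHomogeneousComponent (biWeight n m)
                ((t.1 - (d l).1 : ℕ), (t.2 - (d l).2 : ℕ)) (c l)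
             else 0) * F l := by
        intro l
        by_cases hlj : l < j
        · rw [if_pos hlj]
          by_cases hcond : (d l).1 ≤ t.1 ∧ (d l).2 ≤ t.2
          · rw [if_pos ⟨hlj, hcond⟩]
            have hu : (((t.1 - (d l).1 : ℕ), (t.2 - (d l).2 : ℕ)) : ℕ × ℕ) + d l = t := by
              rw [Prod.ext_iff]
              constructor
              · simp [Prod.fst_add]; omega
              · simp [Prod.snd_add]; omega
            conv_lhs => rw [← hu]
            rw [GVAux.comp_mul (c l) (F l) (hdeg l)]
          · rw [if_neg (fun hcc => hcond hcc.2), zero_mul]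
            apply GVAux.comp_mul_ne (c l) (F l) (hdeg l)
            intro u hu
            apply hcond
            have hu1 := congrArg Prod.fst hu
            have hu2 := congrArg Prod.snd hu
            simp only [Prod.fst_add, Prod.snd_add] at hu1 hu2
            omega
        · rw [if_neg hlj, mul_zero, map_zero, if_neg (fun hcc => hlj hcc.1), zero_mul]
      rw [Finset.sum_congr rfl (fun l _ => hterm l)] at h7
      have hEl : ∀ l : Fin p, ∃ β : k,
          ((if l < j ∧ ((d l).1 ≤ t.1 ∧ (d l).2 ≤ t.2) then
              weightedHomogeneousComponent (biWeight n m)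
                ((t.1 - (d l).1 : ℕ), (t.2 - (d l).2 : ℕ)) (c l)
            else 0)
            - β • (X (Sum.inl 0) ^ (t.1 - (d l).1) * X (Sum.inr 0) ^ (t.2 - (d l).2)) ∈ P i)
          ∧ (¬(l < j ∧ ((d l).1 ≤ t.1 ∧ (d l).2 ≤ t.2)) → β = 0) := by
        intro l
        by_cases hcl : l < j ∧ ((d l).1 ≤ t.1 ∧ (d l).2 ≤ t.2)
        · obtain ⟨β, hβ⟩ := GVAux.nf (P i) hpx hpy
            (weightedHomogeneousComponent_isWeightedHomogeneous
              (w := biWeight n m) (((t.1 - (d l).1 : ℕ), (t.2 - (d l).2 : ℕ)) : ℕ × ℕ) (c l))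
          exact ⟨β, by rw [if_pos hcl]; exact hβ, fun hcon => absurd hcl hcon⟩
        · refine ⟨0, by rw [if_neg hcl]; simp, fun _ => rfl⟩
      choose β hβ hβ0 using hEl
      have hkey : (∑ l ∈ Finset.univ.filter (fun l : Fin p => (d l).1 ≤ t.1 ∧ (d l).2 ≤ t.2),
          (if l = j then γ else -β l)
            • (X (Sum.inl 0) ^ (t.1 - (d l).1) * X (Sum.inr 0) ^ (t.2 - (d l).2) * F l)) ∈ IZ := by
        have hjfil : j ∈ Finset.univ.filter
            (fun l : Fin p => (d l).1 ≤ t.1 ∧ (d l).2 ≤ t.2) :=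
          Finset.mem_filter.mpr ⟨Finset.mem_univ _, htd1, htd2⟩
        have hsum2 : (∑ l ∈ (Finset.univ.filter
              (fun l : Fin p => (d l).1 ≤ t.1 ∧ (d l).2 ≤ t.2)).erase j,
            (if l = j then γ else -β l)
              • (X (Sum.inl 0) ^ (t.1 - (d l).1) * X (Sum.inr 0) ^ (t.2 - (d l).2) * F l))
            = -∑ l : Fin p, β l
                • (X (Sum.inl 0) ^ (t.1 - (d l).1) * X (Sum.inr 0) ^ (t.2 - (d l).2) * F l) := by
          rw [Finset.sum_congr rfl (fun l hl => by
            rw [if_neg (Finset.ne_of_mem_erase hl), neg_smul]), Finset.sum_neg_distrib]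
          congr 1
          apply Finset.sum_subset (Finset.subset_univ _)
          intro l _ hl
          have hβl : β l = 0 := by
            apply hβ0
            intro hcl
            apply hl
            rw [Finset.mem_erase, Finset.mem_filter]
            refine ⟨fun hlj => ?_, Finset.mem_univ _, hcl.2⟩
            exact absurd (hlj ▸ hcl.1) (lt_irrefl j)
          rw [hβl, zero_smul]
        have hsplit : (∑ l ∈ Finset.univ.filter
              (fun l : Fin p => (d l).1 ≤ t.1 ∧ (d l).2 ≤ t.2),
            (if l = j then γ else -β l)
              • (X (Sum.inl 0) ^ (t.1 - (d l).1) * X (Sum.inr 0) ^ (t.2 - (d l).2) * F l))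
            = γ • ((X (Sum.inl 0) ^ (t.1 - (d j).1) * X (Sum.inr 0) ^ (t.2 - (d j).2)) * F j)
              - ∑ l : Fin p, β l
                  • (X (Sum.inl 0) ^ (t.1 - (d l).1) * X (Sum.inr 0) ^ (t.2 - (d l).2) * F l) := by
          rw [← Finset.add_sum_erase _ _ hjfil, hsum2, if_pos rfl, sub_eq_add_neg]
        rw [hsplit]
        have hHcomp : weightedHomogeneousComponent (biWeight n m) t H ∈ IZ := by
          have h5 := hIZhom t hH
          rwa [GVAux.decompose_coe] at h5
        have hfin2 : γ • ((X (Sum.inl 0) ^ (t.1 - (d j).1) * X (Sum.inr 0) ^ (t.2 - (d j).2)) * F j)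
            - ∑ l : Fin p, β l
                • (X (Sum.inl 0) ^ (t.1 - (d l).1) * X (Sum.inr 0) ^ (t.2 - (d l).2) * F l)
            = weightedHomogeneousComponent (biWeight n m) t H
              + ∑ l : Fin p,
                ((if l < j ∧ ((d l).1 ≤ t.1 ∧ (d l).2 ≤ t.2) then
                    weightedHomogeneousComponent (biWeight n m)
                      ((t.1 - (d l).1 : ℕ), (t.2 - (d l).2 : ℕ)) (c l)
                  else 0)
                  - β l • (X (Sum.inl 0) ^ (t.1 - (d l).1) * X (Sum.inr 0) ^ (t.2 - (d l).2)))
                  * F l := by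
          rw [← h7]
          simp only [sub_mul, Finset.sum_sub_distrib, smul_mul_assoc, mul_assoc]
          abel
        rw [hfin2]
        exact Submodule.add_mem _ hHcomp
          (Submodule.sum_mem _ fun l _ => hmulsep _ (hβ l) _ (hFZ' l))
      have hconc := hgood t (fun l => if l = j then γ else -β l) hkey j htd1 htd2
      simpa using hconc
    have hgsum : g = ∑ e ∈ (weightedHomogeneousComponent_finsupp
        (w := biWeight n m) (φ := g)).toFinset,
        weightedHomogeneousComponent (biWeight n m) e g := by
      rw [← finsum_eq_sum _ (weightedHomogeneousComponent_finsupp (w := biWeight n m) (φ := g)),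
        sum_weightedHomogeneousComponent]
    exact hgsum ▸ Submodule.sum_mem _ fun e _ => hcomp e
  · -- P i ≤ colon
    intro g hg
    rw [Submodule.mem_colon]
    intro x hxmem
    obtain ⟨r, rfl⟩ := Ideal.mem_span_singleton'.mp hxmem
    have hrw : g • (r * F j) = r * (g * F j) := by
      rw [smul_eq_mul]; ring
    rw [hrw]
    exact Ideal.mem_sup_left (Ideal.mul_mem_left _ r (hmulsep _ hg _ (hFZ' j)))
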